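/- Let X be a compact metric space, f : X → X continuous, and suppose K₁, K₂ are two disjoint free arcs contained in a free arc J such that K₁ ∪ K₂ ⊆ f(K₁) ∩ f(K₂). Then the topological entropy of f is positive. -/

import Mathlib

/-- `I` is an arc: a homeomorphic image of `[0,1]`. Since `[0,1]` is compact and `X`
is Hausdorff, a continuous injection suffices. -/
def IsArc {X : Type*} [TopologicalSpace X] (I : Set X) : Prop :=
  ∃ φ : ℝ → X, ContinuousOn φ (Set.Icc 0 1) ∧ Set.InjOn φ (Set.Icc 0 1) ∧
    φ '' Set.Icc 0 1 = I

/-- `I` is a free arc: an arc whose "interior part" is open in `X`. -/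
def IsFreeArc {X : Type*} [TopologicalSpace X] (I : Set X) : Prop :=
  ∃ φ : ℝ → X, ContinuousOn φ (Set.Icc 0 1) ∧ Set.InjOn φ (Set.Icc 0 1) ∧
    φ '' Set.Icc 0 1 = I ∧ IsOpen (φ '' Set.Ioo 0 1)

/-- `I` `h`-covers `J`: some subarc of `I` is mapped exactly onto `J` by `h`. -/
def Covers {X : Type*} [TopologicalSpace X] (h : X → X) (I J : Set X) : Prop :=
  ∃ K : Set X, IsArc K ∧ K ⊆ I ∧ h '' K = J

open Dynamics Filter UniformSpace in
open scoped Uniformity ENNReal in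
theorem stmt_10 {X : Type*} [MetricSpace X] [CompactSpace X]
    (f : X → X) (hf : Continuous f)
    (J K₁ K₂ : Set X) (hJ : IsFreeArc J) (hK₁ : IsFreeArc K₁) (hK₂ : IsFreeArc K₂)
    (h1 : K₁ ⊆ J) (h2 : K₂ ⊆ J) (hdisj : Disjoint K₁ K₂)
    (hcov : K₁ ∪ K₂ ⊆ f '' K₁ ∩ f '' K₂) :
    0 < Dynamics.coverEntropy f Set.univ := by
  classical
  obtain ⟨φ₁, hφ₁c, -, hφ₁im, -⟩ := hK₁
  obtain ⟨φ₂, hφ₂c, -, hφ₂im, -⟩ := hK₂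
  have cK₁ : IsCompact K₁ := hφ₁im ▸ (isCompact_Icc.image_of_continuousOn hφ₁c)
  have cK₂ : IsCompact K₂ := hφ₂im ▸ (isCompact_Icc.image_of_continuousOn hφ₂c)
  have neK₁ : K₁.Nonempty := hφ₁im ▸ ((Set.nonempty_Icc.2 zero_le_one).image φ₁)
  -- a positive separation distance between K₁ and K₂
  obtain ⟨δ, δpos, hsep⟩ : ∃ δ > (0:ℝ), ∀ x ∈ K₁, ∀ y ∈ K₂, δ ≤ dist x y := by
    obtain ⟨δ, δpos, hδ⟩ := hdisj.exists_thickenings cK₁ cK₂.isClosed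
    refine ⟨δ, δpos, fun x hx y hy => ?_⟩
    by_contra h
    push_neg at h
    exact Set.disjoint_left.1 hδ
      (Metric.mem_thickening_iff.2 ⟨x, hx, by rwa [dist_comm]⟩)
      (Metric.self_subset_thickening δpos _ hy)
  -- a choice of preimages in K₁ or K₂
  have hpick : ∀ (b : Bool) (y : X), ∃ x : X,
      y ∈ K₁ ∪ K₂ → (x ∈ K₁ ∪ K₂ ∧ x ∈ (bif b then K₁ else K₂) ∧ f x = y) := by
    intro b y
    by_cases hy : y ∈ K₁ ∪ K₂
    · obtain ⟨hy1, hy2⟩ := hcov hy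
      cases b with
      | false =>
        obtain ⟨x, hx, hfx⟩ := hy2
        exact ⟨x, fun _ => ⟨Or.inr hx, by simpa using hx, hfx⟩⟩
      | true =>
        obtain ⟨x, hx, hfx⟩ := hy1
        exact ⟨x, fun _ => ⟨Or.inl hx, by simpa using hx, hfx⟩⟩
    · exact ⟨y, fun h => absurd h hy⟩
  choose g hg using hpick
  obtain ⟨y₀, hy₀⟩ := neK₁
  set p : List Bool → X := fun L => L.foldr g y₀ with hp
  have pcons : ∀ b L, p (b :: L) = g b (p L) := fun _ _ => rfl
  have hmem : ∀ L, p L ∈ K₁ ∪ K₂ := by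
    intro L; induction L with
    | nil => exact Or.inl hy₀
    | cons b L ih => exact (hg b (p L) ih).1
  -- the orbit of `p L` follows the itinerary `L`
  have hiter : ∀ (L : List Bool) (k : ℕ) (hk : k < L.length),
      f^[k] (p L) ∈ (bif L[k] then K₁ else K₂) := by
    intro L
    induction L with
    | nil => intro k hk; simp at hk
    | cons b L ih =>
      intro k hk
      cases k with
      | zero => simpa [pcons] using (hg b (p L) (hmem L)).2.1
      | succ k =>
        have hk' : k < L.length := by simpa using hk
        rw [Function.iterate_succ_apply, pcons, (hg b (p L) (hmem L)).2.2]
        simpa using ih k hk'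
  -- distinct itineraries give δ-separated orbits
  have hdist : ∀ (L L' : List Bool) (k : ℕ) (hk : k < L.length) (hk' : k < L'.length),
      L[k] ≠ L'[k] → δ ≤ dist (f^[k] (p L)) (f^[k] (p L')) := by
    intro L L' k hk hk' hne
    have h1 := hiter L k hk
    have h2 := hiter L' k hk'
    rcases Bool.eq_false_or_eq_true L[k] with hL | hL <;>
      rcases Bool.eq_false_or_eq_true L'[k] with hL' | hL'
    · exact absurd (hL.trans hL'.symm) hne
    · rw [hL] at h1; rw [hL'] at h2; simp only [cond_false, cond_true] at h1 h2
      exact hsep _ h1 _ h2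
    · rw [hL] at h1; rw [hL'] at h2; simp only [cond_false, cond_true] at h1 h2
      rw [dist_comm]; exact hsep _ h2 _ h1
    · exact absurd (hL.trans hL'.symm) hne
  set U : Set (X × X) := {q : X × X | dist q.1 q.2 < δ/2} with hUdef
  have hUuni : U ∈ uniformity X := Metric.dist_mem_uniformity (by positivity)
  haveI hUsymm : SetRel.IsSymm U := ⟨fun a b h => by
    have h' : dist a b < δ/2 := h
    show dist b a < δ/2
    rwa [dist_comm]⟩
  -- 2^n separated points
  have hcard : ∀ n : ℕ, (2^n : ℕ∞) ≤ netMaxcard f Set.univ U n := by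
    intro n
    set q : (Fin n → Bool) → X := fun w => p (List.ofFn w) with hq
    have qsep : ∀ w w' : Fin n → Bool, w ≠ w' →
        ∃ k : Fin n, δ ≤ dist (f^[(k:ℕ)] (q w)) (f^[(k:ℕ)] (q w')) := by
      intro w w' hne
      obtain ⟨k, hk⟩ := Function.ne_iff.1 hne
      refine ⟨k, hdist _ _ k (by simp) (by simp) ?_⟩
      simpa using hk
    have qinj : Function.Injective q := by
      intro w w' h
      by_contra hne
      obtain ⟨k, hk⟩ := qsep w w' hne
      rw [h, dist_self] at hk
      linarith
    set s : Finset X := Finset.image q Finset.univ with hs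
    have hscard : s.card = 2^n := by
      rw [hs, Finset.card_image_of_injective _ qinj, Finset.card_univ]
      simp [Fintype.card_fun]
    have hnet : IsDynNetIn f Set.univ U n (s : Set X) := by
      refine ⟨Set.subset_univ _, ?_⟩
      intro x hx y hy hxy
      simp only [hs, Finset.coe_image, Finset.coe_univ, Set.image_univ, Set.mem_range] at hx hy
      obtain ⟨w, rfl⟩ := hx
      obtain ⟨w', rfl⟩ := hy
      have hww' : w ≠ w' := fun h => hxy (by rw [h])
      refine Set.disjoint_left.2 fun z hz hz' => ?_
      have hmem2 : q w ∈ UniformSpace.ball (q w') (dynEntourage f (SetRel.comp U U) n) :=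
        mem_ball_dynEntourage_comp f n (q w) (q w') ⟨z, hz, hz'⟩
      obtain ⟨k, hk⟩ := qsep w w' hww'
      have hkn : (k : ℕ) < n := k.isLt
      have h3 : (f^[(k:ℕ)] (q w'), f^[(k:ℕ)] (q w)) ∈ SetRel.comp U U :=
        mem_dynEntourage.1 hmem2 k hkn
      obtain ⟨c, hc1, hc2⟩ := h3
      simp only [hUdef, Set.mem_setOf_eq] at hc1 hc2
      have := dist_triangle (f^[(k:ℕ)] (q w')) c (f^[(k:ℕ)] (q w))
      rw [dist_comm] at hk
      linarith
    have := hnet.card_le_netMaxcard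
    rw [hscard] at this
    exact_mod_cast this
  -- conclude: entropy ≥ log 2 > 0
  have hlog : (0:EReal) < ENNReal.log 2 := by
    rw [ENNReal.zero_lt_log_iff]; exact ENNReal.one_lt_two
  have hlb : ENNReal.log 2 ≤ netEntropyEntourage f Set.univ U := by
    rw [netEntropyEntourage]
    refine le_trans (le_of_eq (Filter.limsup_const (ENNReal.log 2)).symm)
      (Filter.limsup_le_limsup (Filter.eventually_atTop.2 ⟨1, fun n hn => ?_⟩))
    have h2 : ENNReal.log ((2:ℝ≥0∞)^n) ≤
        ENNReal.log ((netMaxcard f Set.univ U n : ℕ∞) : ℝ≥0∞) := by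
      apply ENNReal.log_monotone
      exact_mod_cast hcard n
    rw [ENNReal.log_pow] at h2
    have hn0 : (0:EReal) < (n : EReal) := by exact_mod_cast hn
    rw [EReal.le_div_iff_mul_le hn0 (by exact_mod_cast (EReal.natCast_ne_top n))]
    calc ENNReal.log 2 * (n : EReal) = (n : EReal) * ENNReal.log 2 := mul_comm _ _
      _ ≤ _ := h2
  calc (0:EReal) < ENNReal.log 2 := hlog
    _ ≤ netEntropyEntourage f Set.univ U := hlb
    _ ≤ ⨆ V ∈ uniformity X, netEntropyEntourage f Set.univ V :=
        le_iSup₂ (f := fun V (_ : V ∈ uniformity X) => netEntropyEntourage f Set.univ V) U hUuni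
    _ = coverEntropy f Set.univ := (coverEntropy_eq_iSup_netEntropyEntourage f Set.univ).symm
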